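/- arXiv:math/0201005 — 2 statements merged into one kernel-verified Lean document; each statement's English description precedes it below -/
import Mathlib

section
/- For w > 0 and real m, m' not both zero, e^{-2πw|mm'|} = √w · |m'| · ∫_{-∞}^{∞} e^{-t/2}·e^{-πw(m²eᵗ + m'²e^{-t})} dt, provided m' ≠ 0. -/
open Real MeasureTheory Filter Set

lemma sqrt_pi_div (w : ℝ) (hw : 0 < w) : Real.sqrt (π / (π * w)) = (Real.sqrt w)⁻¹ := by
  rw [show π / (π * w) = w⁻¹ by field_simp, Real.sqrt_inv]

private lemma subst_lemma (F G : ℝ → ℝ) (c₀ : ℝ) (h : ∀ t, F (c₀ - t) = G t) :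
    ∫ t : ℝ, F t = ∫ t : ℝ, G t := by
  rw [← integral_sub_left_eq_self F volume c₀]
  congr 1
  funext t
  exact h t

private lemma flip_lemma (s : ℝ) (k : ℝ → ℝ) (hk : ∀ t, k (-t) = k t) :
    (∫ t : ℝ, s * (Real.exp (-t/2) * k t)) = ∫ t : ℝ, s * (Real.exp (t/2) * k t) := by
  rw [← integral_neg_eq_self (fun t => s * (Real.exp (t/2) * k t)) volume]
  congr 1
  funext t
  show s * (Real.exp (-t/2) * k t) = s * (Real.exp (-t/2) * k (-t))
  rw [hk t]

lemma hecke_key (w a b : ℝ) (hw : 0 < w) (ha : 0 ≤ a) (hb : 0 < b) :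
    ∫ t : ℝ, Real.exp (-t / 2) *
        Real.exp (-(π * w * (a ^ 2 * Real.exp t + b ^ 2 * Real.exp (-t))))
      = Real.exp (-(2 * π * w * (a * b))) / (Real.sqrt w * b) := by
  set c := π * w with hc_def
  have hc : 0 < c := by positivity
  rcases eq_or_lt_of_le ha with rfl | ha'
  · -- a = 0
    have hderiv : ∀ t ∈ (univ : Set ℝ), HasDerivWithinAt (fun t => b * Real.exp (-t / 2))
        (-(b/2) * Real.exp (-t/2)) univ t := by
      intro t _
      have : HasDerivAt (fun t : ℝ => b * Real.exp (-t / 2)) (b * (Real.exp (-t/2) * (-1/2))) t :=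
        (((hasDerivAt_id t).neg.div_const 2).exp.const_mul b)
      exact this.hasDerivWithinAt.congr_deriv (by ring)
    have hinj : InjOn (fun t => b * Real.exp (-t / 2)) univ := by
      intro x _ y _ hxy
      simp only [mul_right_inj' hb.ne'] at hxy
      have := Real.exp_injective hxy
      linarith
    have himg : (fun t => b * Real.exp (-t / 2)) '' univ = Ioi 0 := by
      rw [image_univ]
      ext y
      simp only [mem_range, mem_Ioi]
      constructor
      · rintro ⟨t, rfl⟩; positivity
      · intro hy
        refine ⟨-2 * Real.log (y / b), ?_⟩
        rw [show -(-2 * Real.log (y / b)) / 2 = Real.log (y / b) by ring,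
          Real.exp_log (by positivity)]
        field_simp
    have key := integral_image_eq_integral_abs_deriv_smul (MeasurableSet.univ) hderiv hinj
      (fun u => Real.exp (-(c * u ^ 2)))
    rw [himg] at key
    have hgauss : ∫ u in Ioi (0:ℝ), Real.exp (-(c * u ^ 2)) = Real.sqrt (π / c) / 2 := by
      simp_rw [neg_mul_eq_neg_mul]
      exact integral_gaussian_Ioi c
    rw [hgauss] at key
    have heq : ∀ t : ℝ, |(-(b/2) * Real.exp (-t/2))| •
        Real.exp (-(c * (b * Real.exp (-t / 2)) ^ 2))
        = (b/2) * (Real.exp (-t / 2) *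
          Real.exp (-(c * ((0:ℝ) ^ 2 * Real.exp t + b ^ 2 * Real.exp (-t))))) := by
      intro t
      have h1 : |(-(b/2) * Real.exp (-t/2))| = (b/2) * Real.exp (-t/2) := by
        rw [abs_mul, abs_neg, abs_of_pos (by positivity), abs_of_pos (Real.exp_pos _)]
      have h2 : (b * Real.exp (-t / 2)) ^ 2 = (0:ℝ) ^ 2 * Real.exp t + b ^ 2 * Real.exp (-t) := by
        have : Real.exp (-t/2) * Real.exp (-t/2) = Real.exp (-t) := by
          rw [← Real.exp_add]; ring_nf
        nlinarith [this]
      rw [h1, h2, smul_eq_mul]; ring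
    simp_rw [heq, MeasureTheory.setIntegral_univ, integral_const_mul] at key
    rw [show (2:ℝ) * π * w * (0 * b) = 0 by ring, neg_zero, Real.exp_zero]
    rw [show Real.sqrt (π / c) = (Real.sqrt w)⁻¹ from sqrt_pi_div w hw] at key
    have hsw : (0:ℝ) < Real.sqrt w := Real.sqrt_pos.2 hw
    field_simp at key ⊢
    linarith
  · -- a > 0
    set g : ℝ → ℝ := fun t => a * Real.exp (t/2) - b * Real.exp (-t/2) with hg_def
    set g' : ℝ → ℝ := fun t => a/2 * Real.exp (t/2) + b/2 * Real.exp (-t/2) with hg'_def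
    have hg'pos : ∀ t, 0 < g' t := fun t => by positivity
    have hderiv : ∀ t, HasDerivAt g (g' t) t := by
      intro t
      have h1 : HasDerivAt (fun t : ℝ => a * Real.exp (t/2)) (a * (Real.exp (t/2) * (1/2))) t :=
        (((hasDerivAt_id t).div_const 2).exp.const_mul a)
      have h2 : HasDerivAt (fun t : ℝ => b * Real.exp (-t/2)) (b * (Real.exp (-t/2) * (-1/2))) t :=
        (((hasDerivAt_id t).neg.div_const 2).exp.const_mul b)
      exact (h1.sub h2).congr_deriv (by simp only [hg'_def]; ring)
    have hmono : StrictMono g := by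
      have h1 : StrictMono (fun t : ℝ => a * Real.exp (t/2)) := fun x y h =>
        mul_lt_mul_of_pos_left (Real.exp_lt_exp.2 (by linarith)) ha'
      have h2 : StrictMono (fun t : ℝ => -(b * Real.exp (-t/2))) := fun x y h => by
        have : Real.exp (-y/2) < Real.exp (-x/2) := Real.exp_lt_exp.2 (by linarith)
        nlinarith
      have h3 := h1.add h2
      have : g = fun t => a * Real.exp (t/2) + -(b * Real.exp (-t/2)) := by
        funext t; simp only [hg_def]; ring
      rw [this]
      exact h3
    have hcont : Continuous g := by
      simp only [hg_def]
      fun_prop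
    have htop : Tendsto g atTop atTop := by
      have h1 : Tendsto (fun t : ℝ => a * Real.exp (t/2)) atTop atTop := by
        apply Tendsto.const_mul_atTop ha'
        exact Real.tendsto_exp_atTop.comp (tendsto_id.atTop_div_const two_pos)
      apply tendsto_atTop_add_right_of_le' atTop (-b) h1
      filter_upwards [eventually_ge_atTop (0:ℝ)] with t ht
      have h2 : Real.exp (-t/2) ≤ 1 := Real.exp_le_one_iff.2 (by linarith)
      nlinarith
    have hbot : Tendsto g atBot atBot := by
      have h3 : Tendsto (fun t : ℝ => b * Real.exp (-t/2)) atBot atTop := by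
        apply Tendsto.const_mul_atTop hb
        exact Real.tendsto_exp_atTop.comp (tendsto_neg_atBot_atTop.atTop_div_const two_pos)
      have h2 : Tendsto (fun t : ℝ => -(b * Real.exp (-t/2))) atBot atBot :=
        tendsto_neg_atTop_atBot.comp h3
      apply tendsto_atBot_add_left_of_ge' atBot a ?_ h2
      filter_upwards [eventually_le_atBot (0:ℝ)] with t ht
      have h4 : Real.exp (t/2) ≤ 1 := Real.exp_le_one_iff.2 (by linarith)
      nlinarith
    have hsurj : Function.Surjective g := hcont.surjective htop hbot
    have hinj : InjOn g univ := hmono.injective.injOn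
    have hderiv' : ∀ t ∈ (univ : Set ℝ), HasDerivWithinAt g (g' t) univ t :=
      fun t _ => (hderiv t).hasDerivWithinAt
    have himg : g '' univ = univ := by rw [image_univ, hsurj.range_eq]
    -- abbreviations
    set E : ℝ → ℝ := fun t => Real.exp (-(c * (a ^ 2 * Real.exp t + b ^ 2 * Real.exp (-t))))
      with hE_def
    -- pointwise identity for the substituted integrand
    have hpt : ∀ t : ℝ, |g' t| • Real.exp (-(c * g t ^ 2))
        = Real.exp (2 * c * (a * b)) *
            (a/2 * (Real.exp (t/2) * E t) + b/2 * (Real.exp (-t/2) * E t)) := by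
      intro t
      have e1 : Real.exp (t/2) * Real.exp (t/2) = Real.exp t := by
        rw [← Real.exp_add]; ring_nf
      have e2 : Real.exp (-t/2) * Real.exp (-t/2) = Real.exp (-t) := by
        rw [← Real.exp_add]; ring_nf
      have e3 : Real.exp (t/2) * Real.exp (-t/2) = 1 := by
        rw [← Real.exp_add, show t/2 + -t/2 = 0 by ring, Real.exp_zero]
      have hsq : g t ^ 2 = a ^ 2 * Real.exp t + b ^ 2 * Real.exp (-t) - 2 * (a * b) := by
        simp only [hg_def]
        linear_combination a ^ 2 * e1 + b ^ 2 * e2 - 2 * (a * b) * e3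
      rw [abs_of_pos (hg'pos t), smul_eq_mul, hsq]
      rw [show -(c * (a ^ 2 * Real.exp t + b ^ 2 * Real.exp (-t) - 2 * (a * b)))
        = 2 * c * (a * b) + -(c * (a ^ 2 * Real.exp t + b ^ 2 * Real.exp (-t))) by ring,
        Real.exp_add]
      simp only [hg'_def, hE_def]
      ring
    -- the substitution identity
    have key := integral_image_eq_integral_abs_deriv_smul (MeasurableSet.univ) hderiv' hinj
      (fun u => Real.exp (-(c * u ^ 2)))
    rw [himg, MeasureTheory.setIntegral_univ, MeasureTheory.setIntegral_univ] at key
    have hgauss : ∫ u : ℝ, Real.exp (-(c * u ^ 2)) = Real.sqrt (π / c) := by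
      simp_rw [neg_mul_eq_neg_mul]
      exact integral_gaussian c
    rw [hgauss] at key
    simp_rw [hpt] at key
    -- integrability
    have hfullInt : Integrable (fun t => |g' t| • Real.exp (-(c * g t ^ 2))) := by
      have h := (integrableOn_image_iff_integrableOn_abs_deriv_smul (MeasurableSet.univ)
        hderiv' hinj (fun u => Real.exp (-(c * u ^ 2)))).1 ?_
      · rwa [integrableOn_univ] at h
      · rw [himg, integrableOn_univ]
        simp_rw [neg_mul_eq_neg_mul]
        exact integrable_exp_neg_mul_sq hc
    have hEpos : ∀ t, 0 < E t := fun t => Real.exp_pos _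
    have hboundA : ∀ t : ℝ, ‖Real.exp (t/2) * E t‖
        ≤ 2/a * ‖|g' t| • Real.exp (-(c * g t ^ 2))‖ := by
      intro t
      rw [Real.norm_eq_abs, Real.norm_eq_abs, abs_of_pos (by positivity), smul_eq_mul,
        abs_of_pos (by positivity : (0:ℝ) < |g' t| * Real.exp (-(c * g t ^ 2)))]
      have h0 := hpt t
      rw [smul_eq_mul] at h0
      rw [h0]
      have h1 : (1:ℝ) ≤ Real.exp (2 * c * (a * b)) := Real.one_le_exp (by positivity)
      have h2 : 0 ≤ b/2 * (Real.exp (-t/2) * E t) := by positivity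
      have hS : 0 ≤ a/2 * (Real.exp (t/2) * E t) + b/2 * (Real.exp (-t/2) * E t) := by positivity
      have hRS := le_mul_of_one_le_left hS h1
      rw [div_mul_eq_mul_div, le_div_iff₀ ha']
      linarith [hRS, h2]
    have hboundB : ∀ t : ℝ, ‖Real.exp (-t/2) * E t‖
        ≤ 2/b * ‖|g' t| • Real.exp (-(c * g t ^ 2))‖ := by
      intro t
      rw [Real.norm_eq_abs, Real.norm_eq_abs, abs_of_pos (by positivity), smul_eq_mul,
        abs_of_pos (by positivity : (0:ℝ) < |g' t| * Real.exp (-(c * g t ^ 2)))]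
      have h0 := hpt t
      rw [smul_eq_mul] at h0
      rw [h0]
      have h1 : (1:ℝ) ≤ Real.exp (2 * c * (a * b)) := Real.one_le_exp (by positivity)
      have h2 : 0 ≤ a/2 * (Real.exp (t/2) * E t) := by positivity
      have hS : 0 ≤ a/2 * (Real.exp (t/2) * E t) + b/2 * (Real.exp (-t/2) * E t) := by positivity
      have hRS := le_mul_of_one_le_left hS h1
      rw [div_mul_eq_mul_div, le_div_iff₀ hb]
      linarith [hRS, h2]
    have hmeasA : AEStronglyMeasurable (fun t : ℝ => Real.exp (t/2) * E t) volume := by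
      apply Continuous.aestronglyMeasurable; simp only [hE_def]; fun_prop
    have hmeasB : AEStronglyMeasurable (fun t : ℝ => Real.exp (-t/2) * E t) volume := by
      apply Continuous.aestronglyMeasurable; simp only [hE_def]; fun_prop
    have hIA : Integrable (fun t : ℝ => Real.exp (t/2) * E t) :=
      (hfullInt.norm.const_mul (2/a)).mono' hmeasA (ae_of_all _ hboundA)
    have hIB : Integrable (fun t : ℝ => Real.exp (-t/2) * E t) :=
      (hfullInt.norm.const_mul (2/b)).mono' hmeasB (ae_of_all _ hboundB)
    -- split the integral
    set A := ∫ t : ℝ, Real.exp (t/2) * E t with hA_def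
    set B := ∫ t : ℝ, Real.exp (-t/2) * E t with hB_def
    have hsplit : Real.sqrt (π / c)
        = Real.exp (2 * c * (a * b)) * (a/2 * A + b/2 * B) := by
      rw [key, integral_const_mul, integral_add (hIA.const_mul _) (hIB.const_mul _),
        integral_const_mul, integral_const_mul]
    -- symmetry: a * A = b * B
    have hab : a * A = b * B := by
      set c₀ := Real.log (b/a) with hc₀_def
      set r := Real.sqrt (b/a) with hr_def
      have hba : (0:ℝ) < b/a := by positivity
      have hr : Real.exp (c₀/2) = r := by
        rw [hc₀_def, Real.exp_half, Real.exp_log hba, hr_def]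
      have har : a * r = Real.sqrt (a*b) := by
        rw [hr_def, show a * Real.sqrt (b/a) = Real.sqrt (a^2) * Real.sqrt (b/a) by
            rw [Real.sqrt_sq ha'.le],
          ← Real.sqrt_mul (by positivity), show a^2*(b/a) = a*b by field_simp]
      have hbr : b * r⁻¹ = Real.sqrt (a*b) := by
        rw [hr_def, ← Real.sqrt_inv, show b * Real.sqrt ((b/a)⁻¹)
            = Real.sqrt (b^2) * Real.sqrt ((b/a)⁻¹) by rw [Real.sqrt_sq hb.le],
          ← Real.sqrt_mul (by positivity), show b^2*(b/a)⁻¹ = a*b by field_simp]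
      set D : ℝ → ℝ := fun t => Real.exp (-(c * (a*b * (Real.exp t + Real.exp (-t)))))
        with hD_def
      have hE : ∀ t : ℝ, E (c₀ - t) = D t := by
        intro t
        simp only [hE_def, hD_def]
        congr 1
        rw [show c₀ - t = c₀ + -t by ring, Real.exp_add,
          show -(c₀ + -t) = -c₀ + t by ring, Real.exp_add, Real.exp_neg c₀,
          Real.exp_log hba]
        field_simp
        ring
      have hDeven : ∀ t : ℝ, D (-t) = D t := by
        intro t
        simp only [hD_def, neg_neg]
        congr 1
        ring
      have hptA : ∀ t : ℝ, a * (Real.exp ((c₀ - t)/2) * E (c₀ - t))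
          = Real.sqrt (a*b) * (Real.exp (-t/2) * D t) := by
        intro t
        rw [show (c₀ - t)/2 = c₀/2 + -t/2 by ring, Real.exp_add, hr, hE, ← har]
        ring
      have hptB : ∀ t : ℝ, b * (Real.exp (-(c₀ - t)/2) * E (c₀ - t))
          = Real.sqrt (a*b) * (Real.exp (t/2) * D t) := by
        intro t
        rw [show -(c₀ - t)/2 = -(c₀/2) + t/2 by ring, Real.exp_add, Real.exp_neg, hr, hE,
          ← hbr]
        ring
      have hstepA : a * A = ∫ t : ℝ, Real.sqrt (a*b) * (Real.exp (-t/2) * D t) := by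
        rw [hA_def, ← integral_const_mul]
        exact subst_lemma (fun t => a * (Real.exp (t/2) * E t))
          (fun t => Real.sqrt (a*b) * (Real.exp (-t/2) * D t)) c₀ hptA
      have hstepB : b * B = ∫ t : ℝ, Real.sqrt (a*b) * (Real.exp (t/2) * D t) := by
        rw [hB_def, ← integral_const_mul]
        exact subst_lemma (fun t => b * (Real.exp (-t/2) * E t))
          (fun t => Real.sqrt (a*b) * (Real.exp (t/2) * D t)) c₀ hptB
      have hflip : (∫ t : ℝ, Real.sqrt (a*b) * (Real.exp (-t/2) * D t))
          = ∫ t : ℝ, Real.sqrt (a*b) * (Real.exp (t/2) * D t) :=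
        flip_lemma (Real.sqrt (a*b)) D hDeven
      rw [hstepA, hstepB, hflip]
    -- conclude
    have hBval : b * B = Real.sqrt (π / c) * Real.exp (-(2 * c * (a * b))) := by
      have hmix : a/2 * A + b/2 * B = b * B := by linarith
      rw [hmix] at hsplit
      rw [hsplit, mul_comm (Real.exp (2 * c * (a * b))) (b * B), mul_assoc, ← Real.exp_add]
      simp
    have hspd : Real.sqrt (π / c) = (Real.sqrt w)⁻¹ := sqrt_pi_div w hw
    have hsw : (0:ℝ) < Real.sqrt w := Real.sqrt_pos.2 hw
    have hgoal : B = Real.exp (-(2 * π * w * (a * b))) / (Real.sqrt w * b) := by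
      rw [eq_div_iff (by positivity : Real.sqrt w * b ≠ 0)]
      rw [hspd] at hBval
      rw [show (2:ℝ) * π * w * (a * b) = 2 * c * (a * b) by rw [hc_def]; ring]
      rw [show B * (Real.sqrt w * b) = Real.sqrt w * (b * B) by ring, hBval, ← mul_assoc,
        mul_inv_cancel₀ hsw.ne', one_mul]
    exact hgoal

/-- Hecke's integral representation: for `w > 0` and real `m, m'` with `m' ≠ 0`,
`e^{-2πw|mm'|} = √w · |m'| · ∫ e^{-t/2} e^{-πw(m²eᵗ + m'²e^{-t})} dt`. -/
theorem hecke_integral_representation (w m m' : ℝ) (hw : 0 < w) (hm' : m' ≠ 0) :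
    Real.exp (-(2 * π * w * |m * m'|))
      = Real.sqrt w * |m'| *
          ∫ t : ℝ, Real.exp (-t / 2) *
            Real.exp (-(π * w * (m ^ 2 * Real.exp t + m' ^ 2 * Real.exp (-t)))) := by
  have h1 : ∀ t : ℝ, m ^ 2 * Real.exp t + m' ^ 2 * Real.exp (-t)
      = |m| ^ 2 * Real.exp t + |m'| ^ 2 * Real.exp (-t) := by
    intro t; rw [sq_abs, sq_abs]
  simp_rw [h1]
  rw [hecke_key w |m| |m'| hw (abs_nonneg m) (abs_pos.2 hm'), abs_mul]
  have hsw : (0:ℝ) < Real.sqrt w := Real.sqrt_pos.2 hw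
  have hm'' : (0:ℝ) < |m'| := abs_pos.2 hm'
  field_simp
end

section
/- Let K = ℚ(√d) be a real quadratic field with d a squarefree positive integer, with nontrivial Galois automorphism l ↦ l'. Let L ⊆ K be a subgroup of (K,+) that is free abelian of rank 2 spanning K over ℚ. Then for every real t, the set Λ_t = { l·e^{t/2} + i·l'·e^{-t/2} : l ∈ L } is a lattice in ℂ, i.e., a discrete cocompact subgroup of (ℂ,+). -/
open Real Complex

/-- The quotient of `ℂ` by the `ℤ`-span of an `ℝ`-basis is compact. -/
lemma compactSpace_quotient_zspan {ι : Type*} [Fintype ι] (b : Module.Basis ι ℝ ℂ) :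
    CompactSpace (ℂ ⧸ (Submodule.span ℤ (Set.range ⇑b)).toAddSubgroup) := by
  set Λ : AddSubgroup ℂ := (Submodule.span ℤ (Set.range ⇑b)).toAddSubgroup with hΛ
  rw [← isCompact_univ_iff]
  have hb : Bornology.IsBounded (closure (ZSpan.fundamentalDomain b)) :=
    (ZSpan.fundamentalDomain_isBounded b).closure
  have hcomp : IsCompact (closure (ZSpan.fundamentalDomain b)) :=
    Metric.isCompact_of_isClosed_isBounded isClosed_closure hb
  have hcont : Continuous (QuotientAddGroup.mk : ℂ → ℂ ⧸ Λ) := continuous_quotient_mk'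
  have himg : (QuotientAddGroup.mk : ℂ → ℂ ⧸ Λ) '' closure (ZSpan.fundamentalDomain b) =
      Set.univ := by
    refine Set.eq_univ_of_forall fun z => ?_
    obtain ⟨y, rfl⟩ := QuotientAddGroup.mk_surjective z
    refine ⟨ZSpan.fract b y, subset_closure (ZSpan.fract_mem_fundamentalDomain b y), ?_⟩
    rw [QuotientAddGroup.eq_iff_sub_mem]
    have : ZSpan.fract b y - y = -(ZSpan.floor b y : ℂ) := by
      rw [ZSpan.fract_apply]; ring
    rw [this]
    exact neg_mem (SetLike.coe_mem (ZSpan.floor b y))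
  rw [← himg]
  exact hcomp.image hcont

/-- Let `K = ℚ(√d)` be a real quadratic field (`d` squarefree positive, `√d ∈ K`,
`[K : ℚ] = 2`), with a real embedding `σ` and nontrivial Galois automorphism `c`
(so `l' = σ (c l)`).  Let `L ⊆ K` be a free abelian subgroup of rank 2 spanning
`K` over `ℚ`.  Then for every real `t`, the set
`Λ_t = { l e^{t/2} + i l' e^{-t/2} : l ∈ L }` is a lattice in `ℂ`: it is (the
underlying set of) a discrete and cocompact additive subgroup of `ℂ`. -/
theorem hecke_lattice_is_lattice
    (d : ℤ) (hd : Squarefree d) (hdpos : 0 < d)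
    (K : Type) [Field K] [Algebra ℚ K] (h2 : Module.finrank ℚ K = 2)
    (x : K) (hx : x ^ 2 = (d : K)) (hxirr : ¬ ∃ q : ℚ, (q : K) = x)
    (σ : K →+* ℝ) (c : K ≃ₐ[ℚ] K) (hc : σ.comp (c : K →+* K) ≠ σ)
    (L : AddSubgroup K) (l₁ l₂ : K)
    (hL : L = AddSubgroup.closure {l₁, l₂})
    (hind : LinearIndependent ℚ ![l₁, l₂])
    (hspan : Submodule.span ℚ (L : Set K) = ⊤)
    (t : ℝ) :
    ∃ Λ : AddSubgroup ℂ,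
      (Λ : Set ℂ) =
        {z : ℂ | ∃ l ∈ L,
          z = ((σ l * Real.exp (t / 2) : ℝ) : ℂ) +
              Complex.I * ((σ (c l) * Real.exp (-t / 2) : ℝ) : ℂ)} ∧
      DiscreteTopology Λ ∧ CompactSpace (ℂ ⧸ Λ) := by
  set et : ℝ := Real.exp (t / 2) with het
  set es : ℝ := Real.exp (-t / 2) with hes
  have het0 : et ≠ 0 := (Real.exp_pos _).ne'
  have hes0 : es ≠ 0 := (Real.exp_pos _).ne'
  -- the additive map K →+ ℂ
  set φ : K →+ ℂ :=
    { toFun := fun l => ((σ l * et : ℝ) : ℂ) + Complex.I * ((σ (c l) * es : ℝ) : ℂ)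
      map_zero' := by simp
      map_add' := fun a b => by
        push_cast [map_add]
        ring } with hφ
  have hφ_apply : ∀ l : K,
      φ l = ((σ l * et : ℝ) : ℂ) + Complex.I * ((σ (c l) * es : ℝ) : ℂ) := fun l => rfl
  -- `{l₁, l₂}` spans `K` over `ℚ`
  have hspan2 : Submodule.span ℚ ({l₁, l₂} : Set K) = ⊤ := by
    refine top_le_iff.mp ?_
    rw [← hspan]
    refine Submodule.span_le.mpr ?_
    intro z hz
    have : L ≤ (Submodule.span ℚ ({l₁, l₂} : Set K)).toAddSubgroup := by
      rw [hL]
      exact AddSubgroup.closure_le _ |>.mpr (Submodule.subset_span)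
    exact this hz
  -- σ agrees with a ℚ-linear map
  have hsmul : ∀ (q : ℚ) (l : K), σ (q • l) = q * σ l := fun q l => by
    rw [Algebra.smul_def, eq_ratCast (algebraMap ℚ K), map_mul, map_ratCast]
  have hsmulc : ∀ (q : ℚ) (l : K), σ (c (q • l)) = q * σ (c l) := fun q l => by
    have hcq : c ((q : K)) = (q : K) := map_ratCast (c : K →+* K) q
    rw [Algebra.smul_def, eq_ratCast (algebraMap ℚ K), map_mul, hcq, map_mul, map_ratCast]
  -- key: nonvanishing of the determinant
  set a₁ : ℝ := σ l₁ with ha₁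
  set a₂ : ℝ := σ l₂ with ha₂
  set b₁ : ℝ := σ (c l₁) with hb₁
  set b₂ : ℝ := σ (c l₂) with hb₂
  have hdet : a₁ * b₂ - a₂ * b₁ ≠ 0 := by
    intro hD
    -- write 1 as a ℚ-combination of l₁, l₂
    have h1 : (1 : K) ∈ Submodule.span ℚ ({l₁, l₂} : Set K) := hspan2 ▸ Submodule.mem_top
    obtain ⟨q₁, q₂, hq⟩ := Submodule.mem_span_pair.mp h1
    have hqa : (q₁ : ℝ) * a₁ + (q₂ : ℝ) * a₂ = 1 := by
      have := congrArg σ hq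
      rwa [map_add, hsmul, hsmul, map_one] at this
    have hqb : (q₁ : ℝ) * b₁ + (q₂ : ℝ) * b₂ = 1 := by
      have := congrArg (fun z => σ (c z)) hq
      simp only [map_add, hsmulc, map_one] at this
      rw [hb₁, hb₂]
      exact this
    -- deduce σ = σ ∘ c on l₁ and l₂
    have hu : a₁ = b₁ := by linear_combination b₁ * hqa - a₁ * hqb + (q₂ : ℝ) * hD
    have hv : a₂ = b₂ := by linear_combination b₂ * hqa - a₂ * hqb - (q₁ : ℝ) * hD
    -- hence σ ∘ c = σ everywhere, contradiction
    apply hc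
    ext l
    have hl : l ∈ Submodule.span ℚ ({l₁, l₂} : Set K) := hspan2 ▸ Submodule.mem_top
    obtain ⟨r₁, r₂, hr⟩ := Submodule.mem_span_pair.mp hl
    have h₁ := congrArg σ hr
    have h₂ := congrArg (fun z => σ (c z)) hr
    simp only [map_add, hsmul, hsmulc] at h₁ h₂
    simp only [RingHom.coe_comp, Function.comp_apply, RingHom.coe_coe]
    rw [← h₁, ← h₂, ← ha₁, ← ha₂, ← hb₁, ← hb₂, hu, hv]
  -- the two generators of the lattice
  set v₁ : ℂ := φ l₁ with hv₁
  set v₂ : ℂ := φ l₂ with hv₂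
  have hre₁ : v₁.re = a₁ * et := by simp [hv₁, hφ_apply, ha₁]
  have him₁ : v₁.im = b₁ * es := by simp [hv₁, hφ_apply, hb₁]
  have hre₂ : v₂.re = a₂ * et := by simp [hv₂, hφ_apply, ha₂]
  have him₂ : v₂.im = b₂ * es := by simp [hv₂, hφ_apply, hb₂]
  -- linear independence over ℝ
  have hli : LinearIndependent ℝ ![v₁, v₂] := by
    rw [LinearIndependent.pair_iff]
    intro s u hsu
    have hre : s * (a₁ * et) + u * (a₂ * et) = 0 := by
      have := congrArg Complex.re hsu
      simpa [hre₁, hre₂] using this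
    have him : s * (b₁ * es) + u * (b₂ * es) = 0 := by
      have := congrArg Complex.im hsu
      simpa [him₁, him₂] using this
    have hA : s * a₁ + u * a₂ = 0 := by
      have : (s * a₁ + u * a₂) * et = 0 := by ring_nf; ring_nf at hre; linarith
      exact (mul_eq_zero.mp this).resolve_right het0
    have hB : s * b₁ + u * b₂ = 0 := by
      have : (s * b₁ + u * b₂) * es = 0 := by ring_nf; ring_nf at him; linarith
      exact (mul_eq_zero.mp this).resolve_right hes0
    have hs : s = 0 := by
      have : s * (a₁ * b₂ - a₂ * b₁) = 0 := by linear_combination b₂ * hA - a₂ * hB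
      exact (mul_eq_zero.mp this).resolve_right hdet
    have hu : u = 0 := by
      have : u * (a₁ * b₂ - a₂ * b₁) = 0 := by
        linear_combination a₁ * hB - b₁ * hA
      exact (mul_eq_zero.mp this).resolve_right hdet
    exact ⟨hs, hu⟩
  -- build the basis
  have hcard : Fintype.card (Fin 2) = Module.finrank ℝ ℂ := by
    simp [Complex.finrank_real_complex]
  let b : Module.Basis (Fin 2) ℝ ℂ := basisOfLinearIndependentOfCardEqFinrank hli hcard
  have hbcoe : ⇑b = ![v₁, v₂] := coe_basisOfLinearIndependentOfCardEqFinrank hli hcard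
  have hbrange : Set.range ⇑b = {v₁, v₂} := by
    rw [hbcoe]
    ext z
    constructor
    · rintro ⟨i, rfl⟩
      fin_cases i <;> simp
    · rintro (rfl | rfl)
      exacts [⟨0, rfl⟩, ⟨1, rfl⟩]
  refine ⟨(Submodule.span ℤ (Set.range ⇑b)).toAddSubgroup, ?_, ?_, ?_⟩
  · -- the set equality
    have h1 : (Submodule.span ℤ (Set.range ⇑b)).toAddSubgroup
        = AddSubgroup.map φ L := by
      rw [Submodule.span_int_eq_addSubgroupClosure, hbrange, hL,
        AddMonoidHom.map_closure, Set.image_pair]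
    rw [h1]
    ext z
    simp only [AddSubgroup.mem_map, Set.mem_setOf_eq, AddSubgroup.coe_map, Set.mem_image,
      SetLike.mem_coe]
    constructor
    · rintro ⟨l, hlL, rfl⟩
      exact ⟨l, hlL, (hφ_apply l).symm⟩
    · rintro ⟨l, hlL, rfl⟩
      exact ⟨l, hlL, (hφ_apply l)⟩
  · infer_instance
  · exact compactSpace_quotient_zspan b
end
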